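/- Let c be a nonzero complex number and d a positive integer. Then the set {z ∈ ℂ : c·d·z^(d−1) + exp(z) = 0} is infinite. -/

import Mathlib

open Complex Filter Asymptotics Metric Set Real

lemma key_exists (c : ℂ) (hc : c ≠ 0) (d : ℕ) (hd : 0 < d) (R : ℝ) :
    ∃ z : ℂ, (c * (d : ℂ) * z ^ (d - 1) + Complex.exp z = 0) ∧ R < ‖z‖ := by
  set k := d - 1 with hk
  have hw : (-(c * (d : ℂ))) ≠ 0 :=
    neg_ne_zero.mpr (mul_ne_zero hc (Nat.cast_ne_zero.mpr hd.ne'))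
  set L := Complex.log (-(c * (d : ℂ))) with hL
  -- eventual inequality
  have hlog8 : (fun x : ℝ => Real.log (8 * x)) =o[atTop] (id : ℝ → ℝ) := by
    have h8 : Tendsto (fun x : ℝ => 8 * x) atTop atTop :=
      (tendsto_id.const_mul_atTop (by norm_num))
    have := Real.isLittleO_log_id_atTop.comp_tendsto h8
    exact this.trans_isBigO (isBigO_const_mul_self 8 id atTop)
  have hlo : (fun x : ℝ => (‖L‖ + (k : ℝ) * Real.pi) + (k : ℝ) * Real.log (8 * x))
      =o[atTop] (id : ℝ → ℝ) :=
    (isLittleO_const_id_atTop _).add (hlog8.const_mul_left _)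
  have hev : ∀ᶠ x : ℝ in atTop,
      ‖L‖ + (k : ℝ) * (Real.log (8 * x) + Real.pi) ≤ x := by
    filter_upwards [hlo.def one_pos, eventually_ge_atTop (0 : ℝ)] with x h1 h2
    have : (‖L‖ + (k : ℝ) * Real.pi) + (k : ℝ) * Real.log (8 * x) ≤ x := by
      calc _ ≤ ‖(‖L‖ + (k : ℝ) * Real.pi) + (k : ℝ) * Real.log (8 * x)‖ := le_norm_self _
        _ ≤ 1 * ‖id x‖ := h1
        _ = x := by rw [one_mul, id_eq, Real.norm_eq_abs, _root_.abs_of_nonneg h2]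
    nlinarith
  have hevn : ∀ᶠ n : ℕ in atTop,
      (‖L‖ + (k : ℝ) * (Real.log (8 * (n:ℝ)) + Real.pi) ≤ (n:ℝ)) ∧ 1 ≤ (n:ℝ)
        ∧ (k : ℝ) + 1 ≤ (n:ℝ) ∧ R < 5 * (n:ℝ) := by
    have h5 : ∀ᶠ x : ℝ in atTop, R < 5 * x := by
      have : Tendsto (fun x : ℝ => 5 * x) atTop atTop :=
        tendsto_id.const_mul_atTop (by norm_num)
      exact this.eventually_gt_atTop R
    have := (hev.and ((eventually_ge_atTop (1:ℝ)).and
      ((eventually_ge_atTop ((k:ℝ)+1)).and h5)))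
    exact tendsto_natCast_atTop_atTop.eventually this
  obtain ⟨n, hn1, hn2, hn3, hn4⟩ := hevn.exists
  set t : ℝ := (n : ℝ) with ht
  have ht0 : (0:ℝ) < t := lt_of_lt_of_le one_pos hn2
  set a : ℂ := (2 * Real.pi * t : ℝ) * Complex.I with ha
  set B : Set ℂ := Metric.closedBall a t with hB
  -- basic facts about points of B
  have hpi : (3.14 : ℝ) ≤ Real.pi := by linarith [Real.pi_gt_d2]
  have hpi' : Real.pi ≤ 3.15 := by linarith [Real.pi_lt_d2]
  have hmem : ∀ z ∈ B, 5 * t ≤ z.im ∧ 5 * t ≤ ‖z‖ ∧ ‖z‖ ≤ 8 * t := by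
    intro z hz
    have hdist : ‖z - a‖ ≤ t := by
      simpa [dist_eq_norm] using (mem_closedBall.mp hz)
    have him' : |(z - a).im| ≤ t := le_trans (Complex.abs_im_le_norm _) hdist
    have haim : a.im = 2 * Real.pi * t := by simp [ha]
    have him : 5 * t ≤ z.im := by
      have : z.im = a.im + (z - a).im := by simp
      rw [this, haim]
      have := abs_le.mp him'
      nlinarith
    have hnz : 5 * t ≤ ‖z‖ := le_trans him (le_trans (le_abs_self _) (Complex.abs_im_le_norm z))
    have hub : ‖z‖ ≤ 8 * t := by
      have hna : ‖a‖ = 2 * Real.pi * t := by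
        rw [ha, norm_mul, Complex.norm_I, mul_one, Complex.norm_real,
          Real.norm_of_nonneg (by positivity)]
      have hd2 : ‖z - a‖ ≤ t := by
        simpa using hdist
      calc ‖z‖ = ‖a + (z - a)‖ := by congr 1; ring
        _ ≤ ‖a‖ + ‖z - a‖ := norm_add_le _ _
        _ ≤ 8 * t := by rw [hna]; nlinarith
    exact ⟨him, hnz, hub⟩
  have hslit : ∀ z ∈ B, z ∈ Complex.slitPlane := by
    intro z hz
    rw [Complex.mem_slitPlane_iff]
    right
    have := (hmem z hz).1
    exact ne_of_gt (by nlinarith)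
  have hz0 : ∀ z ∈ B, z ≠ 0 := fun z hz h0 => by
    have := (hmem z hz).1; rw [h0] at this; simp at this; nlinarith
  -- the map
  set F : ℂ → ℂ := fun z => L + (k : ℂ) * Complex.log z + (2 * Real.pi * t : ℝ) * Complex.I
    with hF
  -- bound on log
  have hlogbound : ∀ z ∈ B, ‖Complex.log z‖ ≤ Real.log (8 * t) + Real.pi := by
    intro z hz
    obtain ⟨h1, h2, h3⟩ := hmem z hz
    have habs1 : 1 ≤ ‖z‖ := by
      nlinarith
    have : ‖Complex.log z‖ ≤ |(Complex.log z).re| + |(Complex.log z).im| :=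
      Complex.norm_le_abs_re_add_abs_im _
    refine le_trans this ?_
    have hre : |(Complex.log z).re| ≤ Real.log (8 * t) := by
      rw [Complex.log_re, _root_.abs_of_nonneg (Real.log_nonneg habs1)]
      exact Real.log_le_log (by linarith) h3
    have him : |(Complex.log z).im| ≤ Real.pi := by
      rw [Complex.log_im]; exact Complex.abs_arg_le_pi z
    linarith
  have hmaps : Set.MapsTo F B B := by
    intro z hz
    have hlb := hlogbound z hz
    have : ‖F z - a‖ ≤ t := by
      have : F z - a = L + (k : ℂ) * Complex.log z := by rw [hF, ha]; ring
      rw [this]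
      calc ‖L + (k : ℂ) * Complex.log z‖ ≤ ‖L‖ + ‖(k : ℂ) * Complex.log z‖ := norm_add_le _ _
        _ = ‖L‖ + (k : ℝ) * ‖Complex.log z‖ := by
            rw [norm_mul]; norm_num
        _ ≤ ‖L‖ + (k : ℝ) * (Real.log (8 * t) + Real.pi) := by
            have : (0:ℝ) ≤ (k:ℝ) := Nat.cast_nonneg _
            nlinarith
        _ ≤ t := hn1
    simpa [hB, mem_closedBall, dist_eq_norm] using this
  -- Lipschitz bound
  set Kr : ℝ := (k : ℝ) / (5 * t) with hKr
  have hKr0 : 0 ≤ Kr := by positivity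
  have hlip : ∀ z ∈ B, ∀ w ∈ B, ‖F z - F w‖ ≤ Kr * ‖z - w‖ := by
    intro z hz w hw
    have hder : ∀ x ∈ B, HasFDerivWithinAt F
        (ContinuousLinearMap.smulRight (1 : ℂ →L[ℂ] ℂ) ((k : ℂ) * x⁻¹)) B x := by
      intro x hx
      have h1 : HasDerivAt F ((k : ℂ) * x⁻¹) x := by
        have := ((Complex.hasDerivAt_log (hslit x hx)).const_mul ((k : ℕ) : ℂ))
        simpa [hF] using (this.const_add L).add_const ((2 * Real.pi * t : ℝ) * Complex.I)
      exact h1.hasFDerivAt.hasFDerivWithinAt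
    have hbound : ∀ x ∈ B, ‖ContinuousLinearMap.smulRight (1 : ℂ →L[ℂ] ℂ)
        ((k : ℂ) * x⁻¹)‖ ≤ Kr := by
      intro x hx
      rw [ContinuousLinearMap.norm_smulRight_apply, norm_one, one_mul, norm_mul,
        norm_inv]
      obtain ⟨-, h2, -⟩ := hmem x hx
      have hx0 : (0:ℝ) < ‖x‖ := lt_of_lt_of_le (by positivity) h2
      rw [hKr]
      have : ‖(k:ℂ)‖ = (k:ℝ) := by norm_num
      rw [this, div_eq_mul_inv]
      gcongr
    exact (convex_closedBall a t).norm_image_sub_le_of_norm_hasFDerivWithin_le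
      hder hbound hw hz
  -- contraction
  set K : NNReal := ⟨Kr, hKr0⟩ with hKnn
  have hK1 : K < 1 := by
    rw [← NNReal.coe_lt_coe]
    show Kr < 1
    rw [hKr, div_lt_one (by positivity)]
    nlinarith
  have hcontr : ContractingWith K (hmaps.restrict F B B) := by
    refine ⟨hK1, ?_⟩
    have : LipschitzOnWith K F B := by
      rw [lipschitzOnWith_iff_norm_sub_le]
      intro x hx y hy
      exact hlip x hx y hy
    exact this.mapsToRestrict hmaps
  have haB : a ∈ B := mem_closedBall_self ht0.le
  obtain ⟨z, hzB, hzfix, -, -⟩ := hcontr.exists_fixedPoint'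
    (isClosed_closedBall.isComplete) hmaps haB (edist_ne_top _ _)
  -- z is a solution
  have hzne : z ≠ 0 := hz0 z hzB
  have hexp : Complex.exp z = -(c * (d : ℂ)) * z ^ k := by
    conv_lhs => rw [← hzfix]
    show Complex.exp (L + (k : ℂ) * Complex.log z + (2 * Real.pi * t : ℝ) * Complex.I) = _
    rw [Complex.exp_add, Complex.exp_add]
    have h1 : Complex.exp L = -(c * (d : ℂ)) := Complex.exp_log hw
    have h2 : Complex.exp ((k : ℂ) * Complex.log z) = z ^ k := by
      rw [Complex.exp_nat_mul, Complex.exp_log hzne]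
    have h3 : Complex.exp ((2 * Real.pi * t : ℝ) * Complex.I) = 1 := by
      have : ((2 * Real.pi * t : ℝ) : ℂ) * Complex.I = (n : ℂ) * (2 * Real.pi * Complex.I) := by
        rw [ht]; push_cast; ring
      rw [this, Complex.exp_nat_mul_two_pi_mul_I]
    rw [h1, h2, h3]; ring
  refine ⟨z, ?_, ?_⟩
  · rw [hexp]; ring
  · have := (hmem z hzB).2.1
    calc R < 5 * t := hn4
      _ ≤ ‖z‖ := this

theorem stmt_1 (c : ℂ) (hc : c ≠ 0) (d : ℕ) (hd : 0 < d) :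
    {z : ℂ | c * (d : ℂ) * z ^ (d - 1) + Complex.exp z = 0}.Infinite := by
  intro hfin
  obtain ⟨R, hR⟩ := isBounded_iff_forall_norm_le.mp hfin.isBounded
  obtain ⟨z, hz, hz2⟩ := key_exists c hc d hd R
  exact absurd (hR z hz) (not_le.mpr hz2)
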